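/- arXiv:2102.08681 — 2 statements merged into one kernel-verified Lean document; each statement's English description precedes it below -/
import Mathlib

section
/- Let q > 1, K ≥ 1, and let v be an A_q weight on ℝ with constant K; set ν(S) = ∫_S v dx for measurable S ⊆ ℝ. Let Ω ⊆ ℝ be a nonempty open set and E ⊊ Ω a relatively closed subset such that no connected component of Ω is contained in E, and assume that I \ E is connected for every connected component I of Ω. Then the following are equivalent: (i) there exists C > 0 such that |I| ≤ C |I \ E| for every connected component I of Ω, where |·| denotes Lebesgue measure; (ii) there exists C' > 0 such that ν(I) ≤ C' ν(I \ E) for every connected component I of Ω. (In the application, q = p/(p-1) and v = w̃^{1/(1-p)} for an A_p weight w̃.) -/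
open MeasureTheory Set

/-- `v : ℝ → (0,∞)` is an `A_q` weight on `ℝ` with constant `K`:
for every bounded open interval `I`,
`((1/|I|)∫_I v) · ((1/|I|)∫_I v^{1/(1-q)})^{q-1} ≤ K`. -/
def IsAqWeight (q K : ℝ) (v : ℝ → ℝ) : Prop :=
  Measurable v ∧ (∀ x, 0 < v x) ∧
    ∀ a b : ℝ, a < b →
      ((∫⁻ x in Set.Ioo a b, ENNReal.ofReal (v x)) / ENNReal.ofReal (b - a)) *
        ((∫⁻ x in Set.Ioo a b, ENNReal.ofReal (v x ^ (1 / (1 - q)))) /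
            ENNReal.ofReal (b - a)) ^ (q - 1) ≤
      ENNReal.ofReal K

noncomputable def wm (v : ℝ → ℝ) : Measure ℝ :=
  volume.withDensity fun t => ENNReal.ofReal (v t)

noncomputable def sm (q : ℝ) (v : ℝ → ℝ) : Measure ℝ :=
  volume.withDensity fun t => ENNReal.ofReal (v t ^ (1 / (1 - q)))

lemma wm_apply {v : ℝ → ℝ} {s : Set ℝ} (hs : MeasurableSet s) :
    wm v s = ∫⁻ t in s, ENNReal.ofReal (v t) := withDensity_apply _ hs

lemma sm_apply {q : ℝ} {v : ℝ → ℝ} {s : Set ℝ} (hs : MeasurableSet s) :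
    sm q v s = ∫⁻ t in s, ENNReal.ofReal (v t ^ (1 / (1 - q))) := withDensity_apply _ hs

lemma pos_aux {u : ℝ → ℝ} (hm : Measurable u) (hp : ∀ x, 0 < u x)
    {s : Set ℝ} (h : volume s ≠ 0) :
    (volume.withDensity fun t => ENNReal.ofReal (u t)) s ≠ 0 := by
  intro h0
  rw [withDensity_apply_eq_zero hm.ennreal_ofReal] at h0
  apply h
  have : {x | (fun t => ENNReal.ofReal (u t)) x ≠ 0} ∩ s = s := by
    ext y
    simp only [mem_inter_iff, mem_setOf_eq, ne_eq, ENNReal.ofReal_eq_zero, not_le,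
      and_iff_right_iff_imp]
    exact fun _ => hp y
  rwa [this] at h0

lemma wm_pos {v : ℝ → ℝ} (hm : Measurable v) (hp : ∀ x, 0 < v x)
    {s : Set ℝ} (h : volume s ≠ 0) : wm v s ≠ 0 := pos_aux hm hp h

lemma sm_pos {q : ℝ} {v : ℝ → ℝ} (hm : Measurable v) (hp : ∀ x, 0 < v x)
    {s : Set ℝ} (h : volume s ≠ 0) : sm q v s ≠ 0 :=
  pos_aux (hm.pow_const _) (fun x => Real.rpow_pos_of_pos (hp x) _) h

/-- The `A_q` condition, rearranged, plus finiteness. -/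
lemma lemAq {q K : ℝ} (hq : 1 < q) {v : ℝ → ℝ} (hv : IsAqWeight q K v)
    {a b : ℝ} (hab : a < b) :
    wm v (Ioo a b) ≠ ⊤ ∧ sm q v (Ioo a b) ≠ ⊤ ∧
      wm v (Ioo a b) * sm q v (Ioo a b) ^ (q - 1) ≤
        ENNReal.ofReal K * ENNReal.ofReal (b - a) ^ q := by
  obtain ⟨hm, hp, hAq⟩ := hv
  set W := wm v (Ioo a b) with hW
  set S := sm q v (Ioo a b) with hS
  set L := ENNReal.ofReal (b - a) with hL
  have hL0 : L ≠ 0 := by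
    simp only [hL, ne_eq, ENNReal.ofReal_eq_zero, not_le]; linarith
  have hLt : L ≠ ⊤ := ENNReal.ofReal_ne_top
  have hq1 : (0:ℝ) ≤ q - 1 := by linarith
  have h1 : W / L * (S / L) ^ (q - 1) ≤ ENNReal.ofReal K := by
    rw [hW, hS, wm_apply measurableSet_Ioo, sm_apply measurableSet_Ioo]
    exact hAq a b hab
  have hvolI : volume (Ioo a b) ≠ 0 := by
    simp only [Real.volume_Ioo, ne_eq, ENNReal.ofReal_eq_zero, not_le]; linarith
  have hW0 : W ≠ 0 := wm_pos hm hp hvolI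
  have hS0 : S ≠ 0 := sm_pos hm hp hvolI
  -- key rearrangement
  have key : W / L * (S / L) ^ (q - 1) = W * S ^ (q - 1) / L ^ q := by
    have hLL : L ^ q = L * L ^ (q - 1) := by
      have h' : L * L ^ (q - 1) = L ^ (1 + (q - 1)) := by
        rw [ENNReal.rpow_add _ _ hL0 hLt, ENNReal.rpow_one]
      rw [h']
      congr 1
      ring
    have hinv : (L ^ q)⁻¹ = L⁻¹ * (L ^ (q - 1))⁻¹ := by
      rw [hLL, ENNReal.mul_inv (Or.inl hL0) (Or.inl hLt)]
    rw [ENNReal.div_rpow_of_nonneg _ _ hq1, div_eq_mul_inv, div_eq_mul_inv, div_eq_mul_inv,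
      hinv]
    ring
  rw [key] at h1
  have hLq0 : L ^ q ≠ 0 := by
    simp only [ne_eq, ENNReal.rpow_eq_zero_iff, not_or]
    constructor
    · rintro ⟨h, -⟩; exact hL0 h
    · rintro ⟨h, -⟩; exact hLt h
  have hLqt : L ^ q ≠ ⊤ := ENNReal.rpow_ne_top_of_nonneg (by linarith) hLt
  have h2 : W * S ^ (q - 1) ≤ ENNReal.ofReal K * L ^ q :=
    (ENNReal.div_le_iff_le_mul (Or.inl hLq0) (Or.inl hLqt)).1 h1
  have hRfin : ENNReal.ofReal K * L ^ q ≠ ⊤ := ENNReal.mul_ne_top ENNReal.ofReal_ne_top hLqt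
  have hSq0 : S ^ (q - 1) ≠ 0 := by
    simp only [ne_eq, ENNReal.rpow_eq_zero_iff, not_or, not_and]
    exact ⟨fun h => absurd h hS0, fun _ => by linarith⟩
  have hWt : W ≠ ⊤ := by
    intro h
    rw [h, ENNReal.top_mul hSq0] at h2
    exact hRfin (top_le_iff.1 h2)
  have hSt : S ≠ ⊤ := by
    intro h
    rw [h, ENNReal.top_rpow_of_pos (by linarith), ENNReal.mul_top hW0] at h2
    exact hRfin (top_le_iff.1 h2)
  exact ⟨hWt, hSt, h2⟩

/-- Main `A_q` estimate: subsets of an interval with proportional measure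
have proportional weighted measure. -/
lemma lemA {q K : ℝ} (hq : 1 < q) (hK : 1 ≤ K) {v : ℝ → ℝ} (hv : IsAqWeight q K v)
    {a b : ℝ} (hab : a < b) {S : Set ℝ} (hSm : MeasurableSet S) (hSsub : S ⊆ Ioo a b)
    {ρ : ℝ} (hρ : 0 < ρ) (hvol : ENNReal.ofReal (ρ * (b - a)) ≤ volume S) :
    wm v (Ioo a b) ≤ ENNReal.ofReal (K / ρ ^ q) * wm v S := by
  obtain ⟨hWt, hSt, h2⟩ := lemAq hq hv hab
  obtain ⟨hm, hp, -⟩ := id hv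
  have hq0 : (0:ℝ) < q := by linarith
  have hq1 : (0:ℝ) ≤ q - 1 := by linarith
  have hqne : q ≠ 0 := ne_of_gt hq0
  have hqne1 : q - 1 ≠ 0 := by intro h; linarith [sub_eq_zero.1 h]
  have hne0 : ∀ x : ℝ, ENNReal.ofReal (v x) ≠ 0 := fun x => (ENNReal.ofReal_pos.2 (hp x)).ne'
  have hnet : ∀ x : ℝ, ENNReal.ofReal (v x) ≠ ⊤ := fun _ => ENNReal.ofReal_ne_top
  set μ := volume.restrict S with hμ
  have hf : Measurable fun x : ℝ => ENNReal.ofReal (v x) ^ (1 / q) :=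
    hm.ennreal_ofReal.pow_const _
  have hg : Measurable fun x : ℝ => ENNReal.ofReal (v x) ^ (-(1 / q)) :=
    hm.ennreal_ofReal.pow_const _
  have hpq : Real.HolderConjugate q (q / (q - 1)) := by
    refine Real.holderConjugate_iff.2 ⟨hq, ?_⟩
    field_simp
    ring
  have hold := ENNReal.lintegral_mul_le_Lp_mul_Lq μ hpq hf.aemeasurable hg.aemeasurable
  have hLHS : (∫⁻ x, ((fun x : ℝ => ENNReal.ofReal (v x) ^ (1 / q)) *
      fun x : ℝ => ENNReal.ofReal (v x) ^ (-(1 / q))) x ∂μ) = volume S := by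
    have h1 : ∀ x : ℝ, ((fun x : ℝ => ENNReal.ofReal (v x) ^ (1 / q)) *
        fun x : ℝ => ENNReal.ofReal (v x) ^ (-(1 / q))) x = 1 := by
      intro x
      simp only [Pi.mul_apply]
      rw [← ENNReal.rpow_add _ _ (hne0 x) (hnet x)]
      simp
    rw [lintegral_congr h1, lintegral_one, hμ, Measure.restrict_apply_univ]
  have hT1 : (∫⁻ x, (fun x : ℝ => ENNReal.ofReal (v x) ^ (1 / q)) x ^ q ∂μ) = wm v S := by
    have h1 : ∀ x : ℝ, (ENNReal.ofReal (v x) ^ (1 / q)) ^ q = ENNReal.ofReal (v x) := by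
      intro x
      rw [← ENNReal.rpow_mul, one_div, inv_mul_cancel₀ hqne, ENNReal.rpow_one]
    rw [lintegral_congr h1, hμ, ← wm_apply hSm]
  have hT2 : (∫⁻ x, (fun x : ℝ => ENNReal.ofReal (v x) ^ (-(1 / q))) x ^ (q / (q - 1)) ∂μ)
      = sm q v S := by
    have h1 : ∀ x : ℝ, (ENNReal.ofReal (v x) ^ (-(1 / q))) ^ (q / (q - 1))
        = ENNReal.ofReal (v x ^ (1 / (1 - q))) := by
      intro x
      rw [← ENNReal.rpow_mul]
      have h1q : 1 - q ≠ 0 := by intro h; linarith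
      rw [show -(1 / q) * (q / (q - 1)) = 1 / (1 - q) by field_simp; ring]
      exact ENNReal.ofReal_rpow_of_pos (hp x)
    rw [lintegral_congr h1, hμ, ← sm_apply hSm]
  rw [hLHS, hT1, hT2] at hold
  rw [show 1 / (q / (q - 1)) = (q - 1) / q by rw [one_div_div]] at hold
  -- raise to the power q
  have h5 : volume S ^ q ≤ wm v S * sm q v S ^ (q - 1) := by
    calc volume S ^ q ≤ (wm v S ^ (1 / q) * sm q v S ^ ((q - 1) / q)) ^ q :=
          ENNReal.rpow_le_rpow hold hq0.le
      _ = wm v S * sm q v S ^ (q - 1) := by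
          rw [ENNReal.mul_rpow_of_nonneg _ _ hq0.le, ← ENNReal.rpow_mul, ← ENNReal.rpow_mul,
            show 1 / q * q = 1 by field_simp, show (q - 1) / q * q = q - 1 by field_simp,
            ENNReal.rpow_one]
  have h7 : volume S ^ q ≤ wm v S * sm q v (Ioo a b) ^ (q - 1) :=
    h5.trans (mul_le_mul_right (ENNReal.rpow_le_rpow (measure_mono hSsub) hq1) _)
  -- lower bound for `volume S ^ q`
  have hρq : (0:ℝ) < ρ ^ q := Real.rpow_pos_of_pos hρ q
  have hρq0 : ENNReal.ofReal (ρ ^ q) ≠ 0 := (ENNReal.ofReal_pos.2 hρq).ne'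
  have h8 : ENNReal.ofReal (ρ ^ q) * ENNReal.ofReal (b - a) ^ q ≤ volume S ^ q := by
    have h81 := ENNReal.rpow_le_rpow hvol hq0.le
    rwa [ENNReal.ofReal_rpow_of_pos (by nlinarith [sub_pos.2 hab]),
      Real.mul_rpow hρ.le (by linarith : (0:ℝ) ≤ b - a),
      ENNReal.ofReal_mul hρq.le, ← ENNReal.ofReal_rpow_of_pos (sub_pos.2 hab)] at h81
  have h9 : ENNReal.ofReal (b - a) ^ q ≤ (ENNReal.ofReal (ρ ^ q))⁻¹ * volume S ^ q := by
    calc ENNReal.ofReal (b - a) ^ q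
        = (ENNReal.ofReal (ρ ^ q))⁻¹ * (ENNReal.ofReal (ρ ^ q) * ENNReal.ofReal (b - a) ^ q) := by
          rw [← mul_assoc, ENNReal.inv_mul_cancel hρq0 ENNReal.ofReal_ne_top, one_mul]
      _ ≤ (ENNReal.ofReal (ρ ^ q))⁻¹ * volume S ^ q := mul_le_mul_right h8 _
  have h10 : wm v (Ioo a b) * sm q v (Ioo a b) ^ (q - 1) ≤
      (ENNReal.ofReal K * (ENNReal.ofReal (ρ ^ q))⁻¹ * wm v S) * sm q v (Ioo a b) ^ (q - 1) := by
    calc wm v (Ioo a b) * sm q v (Ioo a b) ^ (q - 1)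
        ≤ ENNReal.ofReal K * ENNReal.ofReal (b - a) ^ q := h2
      _ ≤ ENNReal.ofReal K * ((ENNReal.ofReal (ρ ^ q))⁻¹ * volume S ^ q) := mul_le_mul_right h9 _
      _ ≤ ENNReal.ofReal K * ((ENNReal.ofReal (ρ ^ q))⁻¹ *
            (wm v S * sm q v (Ioo a b) ^ (q - 1))) :=
          mul_le_mul_right (mul_le_mul_right h7 _) _
      _ = (ENNReal.ofReal K * (ENNReal.ofReal (ρ ^ q))⁻¹ * wm v S) *
            sm q v (Ioo a b) ^ (q - 1) := by ring
  have hvolI : volume (Ioo a b) ≠ 0 := by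
    simp only [Real.volume_Ioo, ne_eq, ENNReal.ofReal_eq_zero, not_le]; linarith
  have hSig0 : sm q v (Ioo a b) ^ (q - 1) ≠ 0 := by
    simp only [ne_eq, ENNReal.rpow_eq_zero_iff, not_or, not_and]
    exact ⟨fun h => absurd h (sm_pos hm hp hvolI), fun _ => by linarith⟩
  have hSigt : sm q v (Ioo a b) ^ (q - 1) ≠ ⊤ := ENNReal.rpow_ne_top_of_nonneg hq1 hSt
  have hfinal : wm v (Ioo a b) ≤ ENNReal.ofReal K * (ENNReal.ofReal (ρ ^ q))⁻¹ * wm v S :=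
    (ENNReal.mul_le_mul_iff_left hSig0 hSigt).1 h10
  rwa [div_eq_mul_inv, ENNReal.ofReal_mul (by linarith : (0:ℝ) ≤ K),
    ENNReal.ofReal_inv_of_pos hρq]

lemma theta_pos {q K : ℝ} (hq : 1 < q) (hK : 1 ≤ K) :
    0 < (1/4 : ℝ) ^ q / K ∧ (1/4 : ℝ) ^ q / K < 1 := by
  have h1 : (0:ℝ) < (1/4 : ℝ) ^ q := Real.rpow_pos_of_pos (by norm_num) q
  have h2 : (1/4 : ℝ) ^ q < 1 := Real.rpow_lt_one (by norm_num) (by norm_num) (by linarith)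
  constructor
  · positivity
  · calc (1/4 : ℝ) ^ q / K ≤ (1/4 : ℝ) ^ q := div_le_self h1.le hK
      _ < 1 := h2

/-- One doubling step. -/
lemma lemE2 {q K : ℝ} (hq : 1 < q) (hK : 1 ≤ K) {v : ℝ → ℝ} (hv : IsAqWeight q K v)
    {α β c d : ℝ} (hαc : α ≤ c) (hcd : c < d) (hdβ : d ≤ β)
    (hlen : 2 * (d - c) ≤ β - α) :
    wm v (Ioo c d) ≤ ENNReal.ofReal (1 - (1/4 : ℝ) ^ q / K) * wm v (Ioo α β) := by
  set θ := (1/4 : ℝ) ^ q / K with hθ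
  obtain ⟨hθ0, hθ1⟩ := theta_pos hq hK
  have hρq : (0:ℝ) < (1/4 : ℝ) ^ q := Real.rpow_pos_of_pos (by norm_num) q
  have hK0 : (0:ℝ) < K := by linarith
  have hαβ : α < β := by linarith
  have hTfin : wm v (Ioo α β) ≠ ⊤ := (lemAq hq hv hαβ).1
  have hθM : θ * (K / (1/4 : ℝ) ^ q) = 1 := by
    rw [hθ]; field_simp
  -- choose the long side
  have key : ∃ S : Set ℝ, MeasurableSet S ∧ S ⊆ Ioo α β ∧ Disjoint (Ioo c d) S ∧
      ENNReal.ofReal ((1/4) * (β - α)) ≤ volume S := by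
    rcases le_total (c - α) (β - d) with h | h
    · refine ⟨Ioo d β, measurableSet_Ioo, Ioo_subset_Ioo (by linarith) le_rfl, ?_, ?_⟩
      · exact Set.disjoint_left.2 fun x hx hx' => by linarith [hx.2, hx'.1]
      · rw [Real.volume_Ioo]
        exact ENNReal.ofReal_le_ofReal (by linarith)
    · refine ⟨Ioo α c, measurableSet_Ioo, Ioo_subset_Ioo le_rfl (by linarith), ?_, ?_⟩
      · exact Set.disjoint_left.2 fun x hx hx' => by linarith [hx.1, hx'.2]
      · rw [Real.volume_Ioo]
        exact ENNReal.ofReal_le_ofReal (by linarith)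
  obtain ⟨S, hSm, hSsub, hSdisj, hSvol⟩ := key
  have hA : wm v (Ioo α β) ≤ ENNReal.ofReal (K / (1/4 : ℝ) ^ q) * wm v S :=
    lemA hq hK hv hαβ hSm hSsub (by norm_num) hSvol
  have hJfin : wm v (Ioo c d) ≠ ⊤ :=
    ne_top_of_le_ne_top hTfin (measure_mono (Ioo_subset_Ioo hαc hdβ))
  have hSfin : wm v S ≠ ⊤ := ne_top_of_le_ne_top hTfin (measure_mono hSsub)
  have hsum : wm v (Ioo c d) + wm v S ≤ wm v (Ioo α β) := by
    rw [← measure_union hSdisj hSm]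
    exact measure_mono (union_subset (Ioo_subset_Ioo hαc hdβ) hSsub)
  set T := (wm v (Ioo α β)).toReal with hT
  set J := (wm v (Ioo c d)).toReal with hJ
  set Sr := (wm v S).toReal with hSr
  have hsum' : J + Sr ≤ T := by
    have h := ENNReal.toReal_mono hTfin hsum
    rwa [ENNReal.toReal_add hJfin hSfin] at h
  have hA' : T ≤ K / (1/4 : ℝ) ^ q * Sr := by
    have h := ENNReal.toReal_mono (ENNReal.mul_ne_top ENNReal.ofReal_ne_top hSfin) hA
    rwa [ENNReal.toReal_mul, ENNReal.toReal_ofReal (by positivity)] at h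
  have hSrnn : 0 ≤ Sr := ENNReal.toReal_nonneg
  have hkey : J ≤ (1 - θ) * T := by nlinarith [hθ0, hθM, hA', hsum']
  calc wm v (Ioo c d) = ENNReal.ofReal J := (ENNReal.ofReal_toReal hJfin).symm
    _ ≤ ENNReal.ofReal ((1 - θ) * T) := ENNReal.ofReal_le_ofReal hkey
    _ = ENNReal.ofReal (1 - θ) * ENNReal.ofReal T := ENNReal.ofReal_mul (by linarith)
    _ = ENNReal.ofReal (1 - θ) * wm v (Ioo α β) := by rw [ENNReal.ofReal_toReal hTfin]

/-- Iterated doubling. -/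
lemma lemE3 {q K : ℝ} (hq : 1 < q) (hK : 1 ≤ K) {v : ℝ → ℝ} (hv : IsAqWeight q K v)
    (n : ℕ) : ∀ α β c d : ℝ, α ≤ c → c < d → d ≤ β → 2 ^ n * (d - c) ≤ β - α →
    wm v (Ioo c d) ≤ ENNReal.ofReal ((1 - (1/4 : ℝ) ^ q / K) ^ n) * wm v (Ioo α β) := by
  obtain ⟨hθ0, hθ1⟩ := theta_pos hq hK
  induction n with
  | zero =>
    intro α β c d hαc hcd hdβ hlen
    simp only [pow_zero, ENNReal.ofReal_one, one_mul]
    exact measure_mono (Ioo_subset_Ioo hαc hdβ)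
  | succ n ih =>
    intro α β c d hαc hcd hdβ hlen
    have h2n : (1:ℝ) ≤ 2 ^ n := one_le_pow₀ (by norm_num)
    have hδ : (0:ℝ) < d - c := by linarith
    have hps : (2:ℝ) ^ (n+1) = 2 * 2 ^ n := by ring
    have hlen' : 2 * 2 ^ n * (d - c) ≤ β - α := by rw [hps] at hlen; linarith
    set α' := max α (d - 2 ^ n * (d - c)) with hα'
    set β' := α' + 2 ^ n * (d - c) with hβ'
    have hαα' : α ≤ α' := le_max_left _ _
    have hα'c : α' ≤ c := by
      apply max_le hαc
      nlinarith
    have hdβ' : d ≤ β' := by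
      have := le_max_right α (d - 2 ^ n * (d - c))
      rw [hβ']; linarith
    have hβ'β : β' ≤ β := by
      rcases max_choice α (d - 2 ^ n * (d - c)) with h | h
      · rw [hβ', hα', h]; nlinarith
      · rw [hβ', hα', h]; linarith
    have hα'β' : α' < β' := by
      rw [hβ']; nlinarith
    have h1 := ih α' β' c d hα'c hcd hdβ' (by rw [hβ']; linarith)
    have h2 := lemE2 hq hK hv hαα' hα'β' hβ'β (by rw [hβ']; linarith)
    calc wm v (Ioo c d) ≤ ENNReal.ofReal ((1 - (1/4 : ℝ) ^ q / K) ^ n) * wm v (Ioo α' β') := h1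
      _ ≤ ENNReal.ofReal ((1 - (1/4 : ℝ) ^ q / K) ^ n) *
            (ENNReal.ofReal (1 - (1/4 : ℝ) ^ q / K) * wm v (Ioo α β)) := mul_le_mul_right h2 _
      _ = ENNReal.ofReal ((1 - (1/4 : ℝ) ^ q / K) ^ (n+1)) * wm v (Ioo α β) := by
          rw [← mul_assoc, ← ENNReal.ofReal_mul (pow_nonneg (by linarith) n), ← pow_succ]

lemma ray_subset_of_not_bddAbove {J : Set ℝ} (hJoc : J.OrdConnected) (hba : ¬ BddAbove J)
    {x0 : ℝ} (hx0 : x0 ∈ J) : Ici x0 ⊆ J := by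
  intro y hy
  obtain ⟨z, hz, hyz⟩ := not_bddAbove_iff.1 hba y
  exact hJoc.out hx0 hz ⟨hy, hyz.le⟩

lemma ray_subset_of_not_bddBelow {J : Set ℝ} (hJoc : J.OrdConnected) (hbb : ¬ BddBelow J)
    {x0 : ℝ} (hx0 : x0 ∈ J) : Iic x0 ⊆ J := by
  intro y hy
  obtain ⟨z, hz, hyz⟩ := not_bddBelow_iff.1 hbb y
  exact hJoc.out hz hx0 ⟨hyz.le, hy⟩

lemma Ioo_sInf_sSup_subset {J : Set ℝ} (hJoc : J.OrdConnected) (hJne : J.Nonempty) :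
    Ioo (sInf J) (sSup J) ⊆ J := by
  intro y hy
  obtain ⟨t1, ht1, h1⟩ := exists_lt_of_csInf_lt hJne hy.1
  obtain ⟨t2, ht2, h2⟩ := exists_lt_of_lt_csSup hJne hy.2
  exact hJoc.out ht1 ht2 ⟨h1.le, h2.le⟩

lemma sInf_lt_mem {J : Set ℝ} (hJo : IsOpen J) (hbb : BddBelow J) {x0 : ℝ} (hx0 : x0 ∈ J) :
    sInf J < x0 := by
  obtain ⟨ε, hε, hball⟩ := Metric.isOpen_iff.1 hJo x0 hx0
  rw [Real.ball_eq_Ioo] at hball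
  calc sInf J ≤ x0 - ε / 2 := csInf_le hbb (hball ⟨by linarith, by linarith⟩)
    _ < x0 := by linarith

lemma lt_sSup_mem {J : Set ℝ} (hJo : IsOpen J) (hba : BddAbove J) {x0 : ℝ} (hx0 : x0 ∈ J) :
    x0 < sSup J := by
  obtain ⟨ε, hε, hball⟩ := Metric.isOpen_iff.1 hJo x0 hx0
  rw [Real.ball_eq_Ioo] at hball
  calc x0 < x0 + ε / 2 := by linarith
    _ ≤ sSup J := le_csSup hba (hball ⟨by linarith, by linarith⟩)

lemma wm_singleton {v : ℝ → ℝ} (c : ℝ) : wm v {c} = 0 :=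
  withDensity_absolutelyContinuous _ _ (Real.volume_singleton)

lemma wm_le_Ioo {v : ℝ → ℝ} {J : Set ℝ} {c d : ℝ} (hJsub : J ⊆ Icc c d) :
    wm v J ≤ wm v (Ioo c d) := by
  calc wm v J ≤ wm v (Ioo c d ∪ ({c} ∪ {d})) := by
        apply measure_mono
        intro y hy
        rcases (hJsub hy).1.lt_or_eq with h1 | h1
        · rcases (hJsub hy).2.lt_or_eq with h2 | h2
          · exact Or.inl ⟨h1, h2⟩
          · exact Or.inr (Or.inr h2)
        · exact Or.inr (Or.inl h1.symm)
    _ ≤ wm v (Ioo c d) + wm v ({c} ∪ {d}) := measure_union_le _ _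
    _ = wm v (Ioo c d) := by
        rw [measure_union_null (wm_singleton c) (wm_singleton d), add_zero]

/-- Reverse direction, per component. -/
lemma rev_component {q K : ℝ} (hq : 1 < q) (hK : 1 ≤ K) {v : ℝ → ℝ} (hv : IsAqWeight q K v)
    {C' : ℝ} (hC' : 0 < C') {n₀ : ℕ} (hn₀ : (1 - (1/4 : ℝ) ^ q / K) ^ n₀ * C' < 1)
    {I J : Set ℝ} (hJo : IsOpen J) (hIoc : I.OrdConnected) (hJoc : J.OrdConnected)
    (hJI : J ⊆ I) (hJne : J.Nonempty)
    (hw : wm v I ≤ ENNReal.ofReal C' * wm v J) :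
    volume I ≤ ENNReal.ofReal ((2:ℝ) ^ (n₀ + 1)) * volume J := by
  obtain ⟨hm, hp, -⟩ := id hv
  have h2pos : (0:ℝ) < 2 ^ (n₀ + 1) := by positivity
  obtain ⟨x0, hx0⟩ := hJne
  by_cases hba : BddAbove J
  · by_cases hbb : BddBelow J
    · -- bounded case
      set c := sInf J with hc
      set d := sSup J with hd
      have hcx : c < x0 := sInf_lt_mem hJo hbb hx0
      have hxd : x0 < d := lt_sSup_mem hJo hba hx0
      have hcd : c < d := hcx.trans hxd
      have hIoosub : Ioo c d ⊆ J := Ioo_sInf_sSup_subset hJoc ⟨x0, hx0⟩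
      have hJsub : J ⊆ Icc c d := fun y hy => ⟨csInf_le hbb hy, le_csSup hba hy⟩
      set W := wm v (Ioo c d) with hW
      have hWpos : W ≠ 0 := by
        apply wm_pos hm hp
        simp only [Real.volume_Ioo, ne_eq, ENNReal.ofReal_eq_zero, not_le]; linarith
      have hWfin : W ≠ ⊤ := (lemAq hq hv hcd).1
      have hwJW : wm v J ≤ W := wm_le_Ioo hJsub
      have h2n : (1:ℝ) ≤ 2 ^ n₀ := one_le_pow₀ (by norm_num)
      have hθnn : (0:ℝ) ≤ (1 - (1/4 : ℝ) ^ q / K) ^ n₀ := by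
        obtain ⟨h1, h2⟩ := theta_pos hq hK
        exact pow_nonneg (by linarith) _
      have contra : ∀ T : Set ℝ, T ⊆ I →
          W ≤ ENNReal.ofReal ((1 - (1/4 : ℝ) ^ q / K) ^ n₀) * wm v T → False := by
        intro T hTI hWT
        have h1 : (1:ENNReal) * W ≤ ENNReal.ofReal ((1 - (1/4 : ℝ) ^ q / K) ^ n₀ * C') * W := by
          rw [one_mul]
          calc W ≤ ENNReal.ofReal ((1 - (1/4 : ℝ) ^ q / K) ^ n₀) * wm v T := hWT
            _ ≤ ENNReal.ofReal ((1 - (1/4 : ℝ) ^ q / K) ^ n₀) * wm v I :=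
                mul_le_mul_right (measure_mono hTI) _
            _ ≤ ENNReal.ofReal ((1 - (1/4 : ℝ) ^ q / K) ^ n₀) * (ENNReal.ofReal C' * wm v J) :=
                mul_le_mul_right hw _
            _ ≤ ENNReal.ofReal ((1 - (1/4 : ℝ) ^ q / K) ^ n₀) * (ENNReal.ofReal C' * W) :=
                mul_le_mul_right (mul_le_mul_right hwJW _) _
            _ = ENNReal.ofReal ((1 - (1/4 : ℝ) ^ q / K) ^ n₀ * C') * W := by
                rw [ENNReal.ofReal_mul hθnn]; ring
        have h2 := (ENNReal.mul_le_mul_iff_left hWpos hWfin).1 h1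
        exact absurd h2 (not_le.2 (ENNReal.ofReal_lt_one.2 hn₀))
      have key : ∀ y ∈ I, d - 2 ^ n₀ * (d - c) < y ∧ y < c + 2 ^ n₀ * (d - c) := by
        intro y hy
        constructor
        · by_contra h
          push_neg at h
          have hyc : y ≤ c := by nlinarith
          have hIoo : Ioo y d ⊆ I := by
            intro z hz
            have hmax : max z c < d := max_lt hz.2 hcd
            obtain ⟨t, ht⟩ := exists_between hmax
            exact hIoc.out hy (hJI (hIoosub ⟨(le_max_right z c).trans_lt ht.1, ht.2⟩))
              ⟨hz.1.le, ((le_max_left z c).trans_lt ht.1).le⟩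
          exact contra (Ioo y d) hIoo
            (lemE3 hq hK hv n₀ y d c d hyc hcd le_rfl (by linarith))
        · by_contra h
          push_neg at h
          have hdy : d ≤ y := by nlinarith
          have hIoo : Ioo c y ⊆ I := by
            intro z hz
            have hmin : c < min z d := lt_min hz.1 hcd
            obtain ⟨t, ht⟩ := exists_between hmin
            exact hIoc.out (hJI (hIoosub ⟨ht.1, ht.2.trans_le (min_le_right z d)⟩)) hy
              ⟨(ht.2.trans_le (min_le_left z d)).le, hz.2.le⟩
          exact contra (Ioo c y) hIoo
            (lemE3 hq hK hv n₀ c y c d le_rfl hcd hdy (by linarith))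
      have hIsub : I ⊆ Icc (d - 2 ^ n₀ * (d - c)) (c + 2 ^ n₀ * (d - c)) :=
        fun y hy => ⟨(key y hy).1.le, (key y hy).2.le⟩
      calc volume I ≤ volume (Icc (d - 2 ^ n₀ * (d - c)) (c + 2 ^ n₀ * (d - c))) :=
            measure_mono hIsub
        _ = ENNReal.ofReal (c + 2 ^ n₀ * (d - c) - (d - 2 ^ n₀ * (d - c))) := Real.volume_Icc
        _ ≤ ENNReal.ofReal ((2:ℝ) ^ (n₀ + 1) * (d - c)) := by
            apply ENNReal.ofReal_le_ofReal
            have hps : (2:ℝ) ^ (n₀ + 1) * (d - c) = 2 * (2 ^ n₀ * (d - c)) := by ring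
            linarith
        _ = ENNReal.ofReal ((2:ℝ) ^ (n₀ + 1)) * ENNReal.ofReal (d - c) :=
            ENNReal.ofReal_mul h2pos.le
        _ ≤ ENNReal.ofReal ((2:ℝ) ^ (n₀ + 1)) * volume J := by
            apply mul_le_mul_right
            rw [← Real.volume_Ioo]
            exact measure_mono hIoosub
    · have : volume J = ⊤ := by
        rw [eq_top_iff, ← Real.volume_Iic (a := x0)]
        exact measure_mono (ray_subset_of_not_bddBelow hJoc hbb hx0)
      rw [this, ENNReal.mul_top (by simp [ENNReal.ofReal_eq_zero, not_le, h2pos])]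
      exact le_top
  · have : volume J = ⊤ := by
      rw [eq_top_iff, ← Real.volume_Ici (a := x0)]
      exact measure_mono (ray_subset_of_not_bddAbove hJoc hba hx0)
    rw [this, ENNReal.mul_top (by simp [ENNReal.ofReal_eq_zero, not_le, h2pos])]
    exact le_top

/-- interval structure of open ordConnected sets intersected with `Ioo` -/
lemma interval_inter {s : Set ℝ} (hs : IsOpen s) (hc : s.OrdConnected)
    {x0 l r : ℝ} (hx : x0 ∈ s) (hl : l < x0) (hr : x0 < r) :
    ∃ α β : ℝ, l ≤ α ∧ α < x0 ∧ x0 < β ∧ β ≤ r ∧ s ∩ Ioo l r = Ioo α β := by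
  set T := s ∩ Ioo l r with hT
  have hTo : IsOpen T := hs.inter isOpen_Ioo
  have hTc : T.OrdConnected := hc.inter Set.ordConnected_Ioo
  have hxT : x0 ∈ T := ⟨hx, hl, hr⟩
  have hTne : T.Nonempty := ⟨x0, hxT⟩
  have hbdd : BddBelow T := ⟨l, fun y hy => hy.2.1.le⟩
  have hbdd' : BddAbove T := ⟨r, fun y hy => hy.2.2.le⟩
  have key : ∀ y ∈ T, sInf T < y ∧ y < sSup T := by
    intro y hy
    obtain ⟨ε, hε, hball⟩ := Metric.isOpen_iff.1 hTo y hy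
    rw [Real.ball_eq_Ioo] at hball
    constructor
    · calc sInf T ≤ y - ε / 2 := csInf_le hbdd (hball ⟨by linarith, by linarith⟩)
        _ < y := by linarith
    · calc y < y + ε / 2 := by linarith
        _ ≤ sSup T := le_csSup hbdd' (hball ⟨by linarith, by linarith⟩)
  refine ⟨sInf T, sSup T, le_csInf hTne fun y hy => hy.2.1.le, (key x0 hxT).1,
    (key x0 hxT).2, csSup_le hTne fun y hy => hy.2.2.le, ?_⟩
  ext y
  constructor
  · intro hy; exact ⟨(key y hy).1, (key y hy).2⟩
  · rintro ⟨h1, h2⟩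
    obtain ⟨t1, ht1, ht1y⟩ := exists_lt_of_csInf_lt hTne h1
    obtain ⟨t2, ht2, hyt2⟩ := exists_lt_of_lt_csSup hTne h2
    exact hTc.out ht1 ht2 ⟨ht1y.le, hyt2.le⟩

/-- Forward direction, per component. -/
lemma fwd_component {q K : ℝ} (hq : 1 < q) (hK : 1 ≤ K) {v : ℝ → ℝ} (hv : IsAqWeight q K v)
    {C : ℝ} (hC : 0 < C) {I J : Set ℝ}
    (hIo : IsOpen I) (hIoc : I.OrdConnected) (hJo : IsOpen J) (hJoc : J.OrdConnected)
    (hJI : J ⊆ I) (hJne : J.Nonempty)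
    (hIvol : volume I ≤ ENNReal.ofReal C * volume J) :
    wm v I ≤ ENNReal.ofReal (K / (min (1/2 : ℝ) (1/C)) ^ q) * wm v J := by
  obtain ⟨x0, hx0⟩ := hJne
  have hx0I : x0 ∈ I := hJI hx0
  set ρ := min (1/2 : ℝ) (1/C) with hρdef
  have hρ0 : 0 < ρ := lt_min (by norm_num) (by positivity)
  have hρh : ρ ≤ 1/2 := min_le_left _ _
  have hρC : ρ * C ≤ 1 := by
    have h1 : ρ ≤ 1/C := min_le_right _ _
    calc ρ * C ≤ (1/C) * C := by nlinarith
      _ = 1 := by field_simp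
  have hJm : MeasurableSet J := hJo.measurableSet
  -- the exhausting intervals
  have hTex : ∀ n : ℕ, ∃ α β : ℝ, x0 - (n+1) ≤ α ∧ α < x0 ∧ x0 < β ∧ β ≤ x0 + (n+1) ∧
      I ∩ Ioo (x0 - (n+1)) (x0 + (n+1)) = Ioo α β :=
    fun n => interval_inter hIo hIoc hx0I (by push_cast; linarith [Nat.cast_nonneg (α := ℝ) n])
      (by push_cast; linarith [Nat.cast_nonneg (α := ℝ) n])
  choose α β hα hαx hxβ hβ hT using hTex
  -- J ∩ ball structure
  have hSex : ∀ n : ℕ, ∃ γ δ : ℝ, x0 - (n+1) ≤ γ ∧ γ < x0 ∧ x0 < δ ∧ δ ≤ x0 + (n+1) ∧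
      J ∩ Ioo (x0 - (n+1)) (x0 + (n+1)) = Ioo γ δ :=
    fun n => interval_inter hJo hJoc hx0 (by push_cast; linarith [Nat.cast_nonneg (α := ℝ) n])
      (by push_cast; linarith [Nat.cast_nonneg (α := ℝ) n])
  choose γ δ hγ hγx hxδ hδ hS using hSex
  -- main per-n estimate on lengths
  have hlen : ∀ n : ℕ, ρ * (β n - α n) ≤ δ n - γ n := by
    intro n
    have hn0 : (0:ℝ) ≤ (n:ℝ) := Nat.cast_nonneg n
    have hβα : β n - α n ≤ 2 * ((n:ℝ)+1) := by linarith [hα n, hβ n]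
    have hβα0 : 0 ≤ β n - α n := by linarith [hαx n, hxβ n]
    by_cases hba : BddAbove J
    · by_cases hbb : BddBelow J
      · -- bounded case
        set c := sInf J with hc
        set d := sSup J with hd
        have hcx : c < x0 := sInf_lt_mem hJo hbb hx0
        have hxd : x0 < d := lt_sSup_mem hJo hba hx0
        have hIoosub : Ioo c d ⊆ J := Ioo_sInf_sSup_subset hJoc ⟨x0, hx0⟩
        have hJsub : J ⊆ Icc c d := fun y hy => ⟨csInf_le hbb hy, le_csSup hba hy⟩
        have hXC : β n - α n ≤ C * (d - c) := by
          have h1 : ENNReal.ofReal (β n - α n) ≤ ENNReal.ofReal (C * (d - c)) := by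
            calc ENNReal.ofReal (β n - α n) = volume (Ioo (α n) (β n)) := Real.volume_Ioo.symm
              _ = volume (I ∩ Ioo (x0 - ((n:ℝ)+1)) (x0 + ((n:ℝ)+1))) := by rw [hT n]
              _ ≤ volume I := measure_mono inter_subset_left
              _ ≤ ENNReal.ofReal C * volume J := hIvol
              _ ≤ ENNReal.ofReal C * volume (Icc c d) := mul_le_mul_right (measure_mono hJsub) _
              _ = ENNReal.ofReal C * ENNReal.ofReal (d - c) := by rw [Real.volume_Icc]
              _ = ENNReal.ofReal (C * (d - c)) := (ENNReal.ofReal_mul hC.le).symm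
          exact (ENNReal.ofReal_le_ofReal_iff (by nlinarith)).1 h1
        have hδlb : min d (x0 + ((n:ℝ)+1)) ≤ δ n := by
          have hsub : Ioo x0 (min d (x0 + ((n:ℝ)+1))) ⊆ Ioo (γ n) (δ n) := by
            rw [← hS n]
            intro y hy
            refine ⟨hIoosub ⟨hcx.trans hy.1, hy.2.trans_le (min_le_left _ _)⟩, ?_,
              hy.2.trans_le (min_le_right _ _)⟩
            have := hy.1
            linarith
          have hne : x0 < min d (x0 + ((n:ℝ)+1)) := lt_min hxd (by linarith)
          exact ((Set.Ioo_subset_Ioo_iff hne).1 hsub).2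
        have hγub : γ n ≤ max c (x0 - ((n:ℝ)+1)) := by
          have hsub : Ioo (max c (x0 - ((n:ℝ)+1))) x0 ⊆ Ioo (γ n) (δ n) := by
            rw [← hS n]
            intro y hy
            refine ⟨hIoosub ⟨(le_max_left _ _).trans_lt hy.1, hy.2.trans hxd⟩,
              (le_max_right _ _).trans_lt hy.1, ?_⟩
            have := hy.2
            linarith
          have hne : max c (x0 - ((n:ℝ)+1)) < x0 := max_lt hcx (by linarith)
          exact ((Set.Ioo_subset_Ioo_iff hne).1 hsub).1
        have hδγ : min d (x0 + ((n:ℝ)+1)) - max c (x0 - ((n:ℝ)+1)) ≤ δ n - γ n := by linarith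
        rcases le_total d (x0 + ((n:ℝ)+1)) with h1 | h1 <;>
          rcases le_total c (x0 - ((n:ℝ)+1)) with h2 | h2
        · rw [min_eq_left h1, max_eq_right h2] at hδγ
          nlinarith
        · rw [min_eq_left h1, max_eq_left h2] at hδγ
          nlinarith
        · rw [min_eq_right h1, max_eq_right h2] at hδγ
          nlinarith
        · rw [min_eq_right h1, max_eq_left h2] at hδγ
          nlinarith
      · -- J unbounded below
        have hray : Iic x0 ⊆ J := ray_subset_of_not_bddBelow hJoc hbb hx0
        have hγeq : γ n ≤ x0 - ((n:ℝ)+1) := by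
          have hsub : Ioo (x0 - ((n:ℝ)+1)) x0 ⊆ Ioo (γ n) (δ n) := by
            rw [← hS n]
            intro y hy
            exact ⟨hray hy.2.le, hy.1, by linarith [hy.2]⟩
          have hne : x0 - ((n:ℝ)+1) < x0 := by linarith
          exact ((Set.Ioo_subset_Ioo_iff hne).1 hsub).1
        have : δ n - γ n ≥ (n:ℝ) + 1 := by linarith [hxδ n]
        nlinarith
    · -- J unbounded above
      have hray : Ici x0 ⊆ J := ray_subset_of_not_bddAbove hJoc hba hx0
      have hδeq : x0 + ((n:ℝ)+1) ≤ δ n := by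
        have hsub : Ioo x0 (x0 + ((n:ℝ)+1)) ⊆ Ioo (γ n) (δ n) := by
          rw [← hS n]
          intro y hy
          exact ⟨hray hy.1.le, by linarith [hy.1], hy.2⟩
        have hne : x0 < x0 + ((n:ℝ)+1) := by linarith
        exact ((Set.Ioo_subset_Ioo_iff hne).1 hsub).2
      have : δ n - γ n ≥ (n:ℝ) + 1 := by linarith [hγx n]
      nlinarith
  -- each truncation satisfies the bound
  have hTn : ∀ n : ℕ, wm v (I ∩ Ioo (x0 - ((n:ℝ)+1)) (x0 + ((n:ℝ)+1))) ≤
      ENNReal.ofReal (K / ρ ^ q) * wm v J := by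
    intro n
    rw [hT n]
    have hαβ : α n < β n := (hαx n).trans (hxβ n)
    have hSsub : J ∩ Ioo (x0 - ((n:ℝ)+1)) (x0 + ((n:ℝ)+1)) ⊆ Ioo (α n) (β n) := by
      rw [← hT n]
      exact inter_subset_inter_left _ hJI
    have hvolS : ENNReal.ofReal (ρ * (β n - α n)) ≤
        volume (J ∩ Ioo (x0 - ((n:ℝ)+1)) (x0 + ((n:ℝ)+1))) := by
      rw [hS n, Real.volume_Ioo]
      exact ENNReal.ofReal_le_ofReal (hlen n)
    calc wm v (Ioo (α n) (β n)) ≤ ENNReal.ofReal (K / ρ ^ q) *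
          wm v (J ∩ Ioo (x0 - ((n:ℝ)+1)) (x0 + ((n:ℝ)+1))) :=
          lemA hq hK hv hαβ (hJm.inter measurableSet_Ioo) hSsub hρ0 hvolS
      _ ≤ ENNReal.ofReal (K / ρ ^ q) * wm v J :=
          mul_le_mul_right (measure_mono inter_subset_left) _
  -- exhaust I
  have hIU : I = ⋃ n : ℕ, I ∩ Ioo (x0 - ((n:ℝ)+1)) (x0 + ((n:ℝ)+1)) := by
    ext y
    simp only [mem_iUnion, mem_inter_iff, mem_Ioo]
    constructor
    · intro hy
      obtain ⟨n, hn⟩ := exists_nat_gt |y - x0|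
      rw [abs_lt] at hn
      exact ⟨n, hy, by linarith [hn.1], by linarith [hn.2]⟩
    · rintro ⟨n, hn, -⟩
      exact hn
  have hmono : Monotone fun n : ℕ => I ∩ Ioo (x0 - ((n:ℝ)+1)) (x0 + ((n:ℝ)+1)) := by
    intro n m hnm
    apply inter_subset_inter_right
    apply Ioo_subset_Ioo <;> · have : (n:ℝ) ≤ m := Nat.cast_le.2 hnm; linarith
  calc wm v I = wm v (⋃ n : ℕ, I ∩ Ioo (x0 - ((n:ℝ)+1)) (x0 + ((n:ℝ)+1))) := by rw [← hIU]
    _ = ⨆ n : ℕ, wm v (I ∩ Ioo (x0 - ((n:ℝ)+1)) (x0 + ((n:ℝ)+1))) :=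
        hmono.directed_le.measure_iUnion
    _ ≤ ENNReal.ofReal (K / ρ ^ q) * wm v J := iSup_le hTn

/-- **Equivalence of Lebesgue and `A_q`-weighted comparability of components.**
Let `v` be an `A_q` weight, `ν = v dx`, and suppose `I \ E` is connected for every
connected component `I` of `Ω`. Then `|I| ≤ C |I \ E|` holds for all components
with some uniform `C > 0` if and only if `ν(I) ≤ C' ν(I \ E)` holds for all
components with some uniform `C' > 0`. -/
theorem lebesgue_comparable_iff_weighted_comparable
    (q K : ℝ) (hq : 1 < q) (hK : 1 ≤ K) (v : ℝ → ℝ) (hv : IsAqWeight q K v)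
    (Ω E : Set ℝ) (hΩopen : IsOpen Ω) (hΩne : Ω.Nonempty)
    (hE : E ⊂ Ω) (hEclosed : Ω ∩ closure E ⊆ E)
    (hcomp : ∀ x ∈ Ω, ¬ connectedComponentIn Ω x ⊆ E)
    (hconn : ∀ x ∈ Ω, IsPreconnected (connectedComponentIn Ω x \ E)) :
    (∃ C : ℝ, 0 < C ∧ ∀ x ∈ Ω,
        volume (connectedComponentIn Ω x) ≤
          ENNReal.ofReal C * volume (connectedComponentIn Ω x \ E)) ↔
      (∃ C' : ℝ, 0 < C' ∧ ∀ x ∈ Ω,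
        (∫⁻ t in connectedComponentIn Ω x, ENNReal.ofReal (v t)) ≤
          ENNReal.ofReal C' *
            ∫⁻ t in connectedComponentIn Ω x \ E, ENNReal.ofReal (v t)) := by
  have hOE : IsOpen (Ω \ closure E) := hΩopen.sdiff isClosed_closure
  -- component facts
  have setup : ∀ x ∈ Ω,
      IsOpen (connectedComponentIn Ω x) ∧ (connectedComponentIn Ω x).OrdConnected ∧
      IsOpen (connectedComponentIn Ω x \ E) ∧
      (connectedComponentIn Ω x \ E).OrdConnected ∧
      (connectedComponentIn Ω x \ E).Nonempty := by
    intro x hx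
    have hIo : IsOpen (connectedComponentIn Ω x) := hΩopen.connectedComponentIn
    have hIsub : connectedComponentIn Ω x ⊆ Ω := connectedComponentIn_subset _ _
    have hJeq : connectedComponentIn Ω x \ E = connectedComponentIn Ω x ∩ (Ω \ closure E) := by
      ext y
      constructor
      · rintro ⟨hyI, hyE⟩
        exact ⟨hyI, hIsub hyI, fun hc => hyE (hEclosed ⟨hIsub hyI, hc⟩)⟩
      · rintro ⟨hyI, -, hyc⟩
        exact ⟨hyI, fun hyE => hyc (subset_closure hyE)⟩
    refine ⟨hIo, isPreconnected_connectedComponentIn.ordConnected, ?_,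
      (hconn x hx).ordConnected, ?_⟩
    · rw [hJeq]; exact hIo.inter hOE
    · obtain ⟨y, hyI, hyE⟩ := not_subset.1 (hcomp x hx)
      exact ⟨y, hyI, hyE⟩
  constructor
  · rintro ⟨C, hC, hCb⟩
    refine ⟨K / (min (1/2 : ℝ) (1/C)) ^ q, ?_, fun x hx => ?_⟩
    · have hρ0 : (0:ℝ) < min (1/2 : ℝ) (1/C) := lt_min (by norm_num) (by positivity)
      have := Real.rpow_pos_of_pos hρ0 q
      positivity
    · obtain ⟨hIo, hIoc, hJo, hJoc, hJne⟩ := setup x hx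
      rw [← wm_apply hIo.measurableSet, ← wm_apply hJo.measurableSet]
      exact fwd_component hq hK hv hC hIo hIoc hJo hJoc diff_subset hJne (hCb x hx)
  · rintro ⟨C', hC', hC'b⟩
    obtain ⟨hθ0, hθ1⟩ := theta_pos hq hK
    obtain ⟨n₀, hn₀⟩ : ∃ n : ℕ, (1 - (1/4 : ℝ) ^ q / K) ^ n < 1 / C' :=
      exists_pow_lt_of_lt_one (by positivity) (by linarith)
    have hn₀' : (1 - (1/4 : ℝ) ^ q / K) ^ n₀ * C' < 1 := by
      rw [← lt_div_iff₀ hC']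
      exact hn₀
    refine ⟨(2:ℝ) ^ (n₀ + 1), by positivity, fun x hx => ?_⟩
    obtain ⟨hIo, hIoc, hJo, hJoc, hJne⟩ := setup x hx
    have hw : wm v (connectedComponentIn Ω x) ≤
        ENNReal.ofReal C' * wm v (connectedComponentIn Ω x \ E) := by
      rw [wm_apply hIo.measurableSet, wm_apply hJo.measurableSet]
      exact hC'b x hx
    exact rev_component hq hK hv hC' hn₀' hJo hIoc hJoc diff_subset hJne hw
end

section
/- Let R ∈ ℝ and let m : (R, ∞) → ℝ be continuous and bounded. Assume that m has no local minimum, i.e., there is no point t₀ ∈ (R, ∞) and δ > 0 such that m(t₀) ≤ m(t) for all t ∈ (t₀ - δ, t₀ + δ) ∩ (R, ∞). Then lim_{t→∞} m(t) exists (as a finite real number). -/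
open Set

/-- **A bounded continuous function on a half-line with no local minimum has a
limit at infinity.** If `m : (R,∞) → ℝ` is continuous and bounded and there is no
`t₀ ∈ (R,∞)` and `δ > 0` with `m(t₀) ≤ m(t)` for all `t ∈ (t₀-δ, t₀+δ) ∩ (R,∞)`,
then `lim_{t→∞} m(t)` exists. -/
theorem tendsto_atTop_of_no_local_min
    (R : ℝ) (m : ℝ → ℝ)
    (hcont : ContinuousOn m (Set.Ioi R))
    (hbdd : ∃ M : ℝ, ∀ t ∈ Set.Ioi R, |m t| ≤ M)
    (hnomin : ¬ ∃ t₀ ∈ Set.Ioi R, ∃ δ : ℝ, 0 < δ ∧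
      ∀ t ∈ Set.Ioo (t₀ - δ) (t₀ + δ) ∩ Set.Ioi R, m t₀ ≤ m t) :
    ∃ L : ℝ, Filter.Tendsto m Filter.atTop (nhds L) := by
  obtain ⟨M, hM⟩ := hbdd
  -- quasiconcavity: on any [a,b] ⊆ (R,∞), min of endpoints bounds m from below
  have quasi : ∀ a b t : ℝ, R < a → a ≤ t → t ≤ b → min (m a) (m b) ≤ m t := by
    intro a b t ha hat htb
    by_contra h
    push_neg at h
    have hma : m t < m a := lt_of_lt_of_le h (min_le_left _ _)
    have hmb : m t < m b := lt_of_lt_of_le h (min_le_right _ _)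
    have hsub : Icc a b ⊆ Ioi R := fun s hs => lt_of_lt_of_le ha hs.1
    obtain ⟨t₀, ht₀mem, ht₀min⟩ :=
      isCompact_Icc.exists_isMinOn ⟨t, hat, htb⟩ (hcont.mono hsub)
    have hmt₀ : m t₀ ≤ m t := ht₀min ⟨hat, htb⟩
    have ht₀a : a < t₀ := by
      rcases lt_or_eq_of_le ht₀mem.1 with h' | h'
      · exact h'
      · exact absurd (h' ▸ hmt₀) (not_le.mpr hma)
    have ht₀b : t₀ < b := by
      rcases lt_or_eq_of_le ht₀mem.2 with h' | h'
      · exact h'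
      · exact absurd (h' ▸ hmt₀) (not_le.mpr hmb)
    refine hnomin ⟨t₀, hsub ht₀mem, min (t₀ - a) (b - t₀),
      lt_min (by linarith) (by linarith), ?_⟩
    intro s hs
    have h1 : t₀ - min (t₀ - a) (b - t₀) < s := hs.1.1
    have h2 : s < t₀ + min (t₀ - a) (b - t₀) := hs.1.2
    have hsa : a ≤ s := by
      have := min_le_left (t₀ - a) (b - t₀); linarith
    have hsb : s ≤ b := by
      have := min_le_right (t₀ - a) (b - t₀); linarith
    exact ht₀min ⟨hsa, hsb⟩
  by_cases hdec : ∃ a ∈ Ioi R, ∃ b ∈ Ioi R, a < b ∧ m b < m a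
  · -- eventually antitone case
    obtain ⟨a, ha, b, hb, hab, hba⟩ := hdec
    have anti : ∀ s t : ℝ, b ≤ s → s ≤ t → m t ≤ m s := by
      intro s t hbs hst
      have hms : m s ≤ m b := by
        have := quasi a s b ha hab.le hbs
        rcases min_le_iff.mp this with h' | h'
        · linarith
        · exact h'
      have := quasi a t s ha (hab.le.trans hbs) hst
      rcases min_le_iff.mp this with h' | h'
      · linarith
      · exact h'
    set g : ℝ → ℝ := fun t => m (max t b) with hg
    have hganti : Antitone g := by
      intro s t hst
      exact anti _ _ (le_max_right _ _) (max_le_max hst le_rfl)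
    have hbddb : BddBelow (Set.range g) := by
      refine ⟨-M, ?_⟩
      rintro _ ⟨t, rfl⟩
      have : R < max t b := lt_of_lt_of_le hb (le_max_right _ _)
      exact neg_le_of_abs_le (hM _ this)
    have := tendsto_atTop_ciInf hganti hbddb
    refine ⟨_, this.congr' ?_⟩
    filter_upwards [Filter.eventually_ge_atTop b] with t ht
    simp [hg, max_eq_left ht]
  · push_neg at hdec
    have mono : ∀ s t : ℝ, R < s → s ≤ t → m s ≤ m t := by
      intro s t hs hst
      rcases eq_or_lt_of_le hst with h | h
      · exact h ▸ le_refl _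
      · exact hdec s hs t (hs.trans h) h
    set g : ℝ → ℝ := fun t => m (max t (R + 1)) with hg
    have hgmono : Monotone g := by
      intro s t hst
      exact mono _ _ (lt_of_lt_of_le (by linarith) (le_max_right _ _))
        (max_le_max hst le_rfl)
    have hbdd : BddAbove (Set.range g) := by
      refine ⟨M, ?_⟩
      rintro _ ⟨t, rfl⟩
      have : R < max t (R + 1) := lt_of_lt_of_le (by linarith) (le_max_right _ _)
      exact le_trans (le_abs_self _) (hM _ this)
    have := tendsto_atTop_ciSup hgmono hbdd
    refine ⟨_, this.congr' ?_⟩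
    filter_upwards [Filter.eventually_ge_atTop (R + 1)] with t ht
    simp [hg, max_eq_left ht]
end
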